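/- arXiv:1803.11313 — 2 statements merged into one kernel-verified Lean document; each statement's English description precedes it below -/
import Mathlib

section
/- Any vertex of the polytope {w ∈ R^{S*} : w ≥ 0, Σ_{h: h_i = x} w_h = d_i(x) for all i ≤ n, x ∈ P_i} has at most (Σ_{i=1}^n |P_i|) - n + 1 nonzero coordinates. -/
open Finset
open scoped Classical

/-- Sparsity of vertices: any extreme point of the feasible region of LP (general)
has at most `(∑ i, |P_i|) - n + 1` nonzero coordinates. -/
theorem general_LP_vertex_sparsity {α : Type*} (n : ℕ) (hn : 1 ≤ n)
    (P : Fin n → Finset α) (d : (i : Fin n) → α → ℝ)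
    (hd_pos : ∀ i, ∀ x ∈ P i, 0 < d i x)
    (hd_sum : ∀ i, ∑ x ∈ P i, d i x = 1)
    (w : (Fin n → α) → ℝ)
    (hw : w ∈ Set.extremePoints ℝ
      {v : (Fin n → α) → ℝ |
        (∀ h, 0 ≤ v h) ∧
        (∀ h, h ∉ Fintype.piFinset P → v h = 0) ∧
        (∀ i : Fin n, ∀ x ∈ P i,
          ∑ h ∈ (Fintype.piFinset P).filter (fun h => h i = x), v h = d i x)}) :
    ((Fintype.piFinset P).filter (fun h => w h ≠ 0)).card
      ≤ (∑ i, (P i).card) - n + 1 := by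
  classical
  obtain ⟨⟨hw0, hwz, hwm⟩, hext⟩ := hw
  set i₀ : Fin n := ⟨0, hn⟩ with hi₀
  have hPne : ∀ i, (P i).Nonempty := by
    intro i
    rcases (P i).eq_empty_or_nonempty with h | h
    · exfalso; have := hd_sum i; rw [h, Finset.sum_empty] at this; norm_num at this
    · exact h
  set S : Finset (Fin n → α) := (Fintype.piFinset P).filter (fun h => w h ≠ 0) with hS
  have hSsub : ∀ h ∈ S, h ∈ Fintype.piFinset P := fun h hh => (Finset.mem_filter.1 hh).1
  have hSpos : ∀ h ∈ S, 0 < w h :=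
    fun h hh => lt_of_le_of_ne (hw0 h) (Ne.symm (Finset.mem_filter.1 hh).2)
  -- the marginal linear map on functions supported on S
  let A : ({h // h ∈ S} → ℝ) →ₗ[ℝ] ((Σ i : Fin n, {x // x ∈ P i}) → ℝ) :=
    { toFun := fun z p => ∑ h : {h // h ∈ S}, if (h : Fin n → α) p.1 = p.2 then z h else 0
      map_add' := by
        intro z₁ z₂; funext p
        simp only [Pi.add_apply]
        rw [← Finset.sum_add_distrib]
        exact Finset.sum_congr rfl fun h _ => by split <;> simp
      map_smul' := by
        intro c z; funext p
        simp only [Pi.smul_apply, smul_eq_mul, RingHom.id_apply]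
        rw [Finset.mul_sum]
        exact Finset.sum_congr rfl fun h _ => by split <;> simp }
  have hA_apply : ∀ (z : {h // h ∈ S} → ℝ) (p : Σ i : Fin n, {x // x ∈ P i}),
      A z p = ∑ h : {h // h ∈ S}, if (h : Fin n → α) p.1 = p.2 then z h else 0 := fun _ _ => rfl
  -- extension of a vector on S by zero
  -- key: marginal sums of the extension equal components of A
  have key : ∀ (z : {h // h ∈ S} → ℝ) (i : Fin n) (x : α) (hx : x ∈ P i),
      ∑ h ∈ (Fintype.piFinset P).filter (fun h => h i = x),
        (if hh : h ∈ S then z ⟨h, hh⟩ else 0)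
      = A z ⟨i, ⟨x, hx⟩⟩ := by
    intro z i x hx
    rw [hA_apply]
    have h1 : ∑ h ∈ (Fintype.piFinset P).filter (fun h => h i = x),
        (if hh : h ∈ S then z ⟨h, hh⟩ else 0)
        = ∑ h ∈ S.filter (fun h => h i = x), (if hh : h ∈ S then z ⟨h, hh⟩ else 0) := by
      refine (Finset.sum_subset ?_ ?_).symm
      · intro h hh
        simp only [Finset.mem_filter] at hh ⊢
        exact ⟨hSsub h hh.1, hh.2⟩
      · intro h hh hns
        simp only [Finset.mem_filter] at hh hns
        rw [dif_neg (fun hhS => hns ⟨hhS, hh.2⟩)]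
    rw [h1, Finset.sum_filter, ← Finset.sum_attach S
      (fun h => if h i = x then (if hh : h ∈ S then z ⟨h, hh⟩ else 0) else 0)]
    refine Finset.sum_congr rfl fun h _ => ?_
    rw [dif_pos h.2]
  -- injectivity of A (this is where extremality is used)
  have hAinj : Function.Injective A := by
    rw [injective_iff_map_eq_zero]
    intro z hz
    by_contra hz0
    obtain ⟨h₀, hh₀⟩ : ∃ h, z h ≠ 0 := by
      by_contra hc; push_neg at hc; exact hz0 (funext hc)
    have hSne : S.Nonempty := ⟨h₀.1, h₀.2⟩
    set zext : (Fin n → α) → ℝ := fun h => if hh : h ∈ S then z ⟨h, hh⟩ else 0 with hzext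
    have hzext0 : ∀ h ∉ S, zext h = 0 := fun h hh => dif_neg hh
    set m : ℝ := S.inf' hSne w with hm
    set M : ℝ := S.sup' hSne (fun h => |zext h|) with hM
    have hmpos : 0 < m := (Finset.lt_inf'_iff hSne).2 fun h hh => hSpos h hh
    have hM0 : 0 ≤ M := by
      rw [hM]; exact le_trans (abs_nonneg _) (Finset.le_sup' (fun h => |zext h|) h₀.2)
    set ε : ℝ := m / (M + 1) with hε
    have hεpos : 0 < ε := div_pos hmpos (by linarith)
    have hεM : ε * M < m := by
      rw [hε, div_mul_eq_mul_div, div_lt_iff₀ (by linarith)]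
      nlinarith
    set a : (Fin n → α) → ℝ := fun h => w h + ε * zext h with ha
    set b : (Fin n → α) → ℝ := fun h => w h - ε * zext h with hb
    have habs : ∀ h, ε * |zext h| < w h ∨ zext h = 0 := by
      intro h
      by_cases hh : h ∈ S
      · left
        have h1 : |zext h| ≤ M := by rw [hM]; exact Finset.le_sup' (fun h => |zext h|) hh
        have h2 : m ≤ w h := by rw [hm]; exact Finset.inf'_le w hh
        nlinarith
      · right; exact hzext0 h hh
    have hmarg : ∀ (i : Fin n), ∀ x ∈ P i,
        ∑ h ∈ (Fintype.piFinset P).filter (fun h => h i = x), zext h = 0 := by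
      intro i x hx
      rw [show ∑ h ∈ (Fintype.piFinset P).filter (fun h => h i = x), zext h
          = ∑ h ∈ (Fintype.piFinset P).filter (fun h => h i = x),
              (if hh : h ∈ S then z ⟨h, hh⟩ else 0) from rfl, key z i x hx, hz]
      rfl
    have hamem : a ∈ {v : (Fin n → α) → ℝ |
        (∀ h, 0 ≤ v h) ∧
        (∀ h, h ∉ Fintype.piFinset P → v h = 0) ∧
        (∀ i : Fin n, ∀ x ∈ P i,
          ∑ h ∈ (Fintype.piFinset P).filter (fun h => h i = x), v h = d i x)} := by
      refine ⟨?_, ?_, ?_⟩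
      · intro h
        rcases habs h with hc | hc
        · have := abs_nonneg (zext h)
          have := neg_abs_le (zext h)
          simp only [ha]
          nlinarith
        · simp [ha, hc, hw0 h]
      · intro h hh
        have h1 : h ∉ S := fun hc => hh (hSsub h hc)
        simp [ha, hwz h hh, hzext0 h h1]
      · intro i x hx
        simp only [ha]
        rw [Finset.sum_add_distrib, hwm i x hx, ← Finset.mul_sum, hmarg i x hx]
        ring
    have hbmem : b ∈ {v : (Fin n → α) → ℝ |
        (∀ h, 0 ≤ v h) ∧
        (∀ h, h ∉ Fintype.piFinset P → v h = 0) ∧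
        (∀ i : Fin n, ∀ x ∈ P i,
          ∑ h ∈ (Fintype.piFinset P).filter (fun h => h i = x), v h = d i x)} := by
      refine ⟨?_, ?_, ?_⟩
      · intro h
        rcases habs h with hc | hc
        · have := abs_nonneg (zext h)
          have := le_abs_self (zext h)
          simp only [hb]
          nlinarith
        · simp [hb, hc, hw0 h]
      · intro h hh
        have h1 : h ∉ S := fun hc => hh (hSsub h hc)
        simp [hb, hwz h hh, hzext0 h h1]
      · intro i x hx
        simp only [hb]
        rw [Finset.sum_sub_distrib, hwm i x hx, ← Finset.mul_sum, hmarg i x hx]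
        ring
    have hseg : w ∈ openSegment ℝ a b := by
      refine ⟨1/2, 1/2, by norm_num, by norm_num, by norm_num, ?_⟩
      funext h
      simp only [ha, hb, Pi.add_apply, Pi.smul_apply, smul_eq_mul]
      ring
    have haw : a = w := hext hamem hbmem hseg
    have : ε * zext h₀.1 = 0 := by
      have := congrFun haw h₀.1
      simp only [ha] at this
      linarith
    have hz1 : zext h₀.1 = 0 := by
      rcases mul_eq_zero.1 this with hc | hc
      · exact absurd hc (ne_of_gt hεpos)
      · exact hc
    rw [hzext] at hz1
    simp only [dif_pos h₀.2] at hz1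
    exact hh₀ (by rwa [Subtype.eta] at hz1)
  -- the map comparing block sums
  let L : ((Σ i : Fin n, {x // x ∈ P i}) → ℝ) →ₗ[ℝ] ({j : Fin n // j ≠ i₀} → ℝ) :=
    { toFun := fun y j => (∑ x : {x // x ∈ P j.1}, y ⟨j.1, x⟩) - ∑ x : {x // x ∈ P i₀}, y ⟨i₀, x⟩
      map_add' := by
        intro y₁ y₂; funext j
        simp only [Pi.add_apply, Finset.sum_add_distrib]
        ring
      map_smul' := by
        intro c y; funext j
        simp only [Pi.smul_apply, smul_eq_mul, RingHom.id_apply, ← Finset.mul_sum]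
        ring }
  have hL_apply : ∀ (y : (Σ i : Fin n, {x // x ∈ P i}) → ℝ) (j : {j : Fin n // j ≠ i₀}),
      L y j = (∑ x : {x // x ∈ P j.1}, y ⟨j.1, x⟩) - ∑ x : {x // x ∈ P i₀}, y ⟨i₀, x⟩ :=
    fun _ _ => rfl
  -- column sums of A are all equal to the total sum
  have hcol : ∀ (z : {h // h ∈ S} → ℝ) (i : Fin n),
      ∑ x : {x // x ∈ P i}, A z ⟨i, x⟩ = ∑ h : {h // h ∈ S}, z h := by
    intro z i
    simp only [hA_apply]
    rw [Finset.sum_comm]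
    refine Finset.sum_congr rfl fun h _ => ?_
    have hx : (h : Fin n → α) i ∈ P i := by
      have := Fintype.mem_piFinset.1 (hSsub h.1 h.2)
      exact this i
    have : ∑ x : {x // x ∈ P i}, (if (h : Fin n → α) i = ↑x then z h else 0)
        = ∑ x : {x // x ∈ P i}, (if x = (⟨(h : Fin n → α) i, hx⟩ : {x // x ∈ P i})
            then z h else 0) := by
      refine Finset.sum_congr rfl fun x _ => ?_
      congr 1
      simp [Subtype.ext_iff, eq_comm]
    rw [this, Finset.sum_ite_eq' Finset.univ, if_pos (Finset.mem_univ _)]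
  -- A maps into ker L
  have hAL : ∀ z, L (A z) = 0 := by
    intro z
    funext j
    rw [hL_apply, hcol, hcol]
    simp
  -- L is surjective
  have hLsurj : Function.Surjective L := by
    intro t
    refine ⟨fun p => if hp : p.1 = i₀ then 0
      else (if p.2.1 = (hPne p.1).choose then t ⟨p.1, hp⟩ else 0), ?_⟩
    funext j
    rw [hL_apply]
    have h2 : ∑ x : {x // x ∈ P i₀},
        (if hp : (⟨i₀, x⟩ : Σ i : Fin n, {x // x ∈ P i}).1 = i₀ then 0
          else (if x.1 = (hPne i₀).choose then t ⟨i₀, hp⟩ else 0)) = 0 := by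
      simp
    have h1 : ∑ x : {x // x ∈ P j.1},
        (if hp : (⟨j.1, x⟩ : Σ i : Fin n, {x // x ∈ P i}).1 = i₀ then 0
          else (if x.1 = (hPne j.1).choose then t ⟨j.1, hp⟩ else 0)) = t j := by
      have hj : ¬ (j.1 = i₀) := j.2
      have : ∀ x : {x // x ∈ P j.1},
          (if hp : (⟨j.1, x⟩ : Σ i : Fin n, {x // x ∈ P i}).1 = i₀ then 0
            else (if x.1 = (hPne j.1).choose then t ⟨j.1, hp⟩ else 0))
          = (if x = (⟨(hPne j.1).choose, (hPne j.1).choose_spec⟩ : {x // x ∈ P j.1})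
              then t j else 0) := by
        intro x
        rw [dif_neg hj]
        congr 1
        simp [Subtype.ext_iff]
      rw [Finset.sum_congr rfl fun x _ => this x, Finset.sum_ite_eq' Finset.univ,
        if_pos (Finset.mem_univ _)]
    rw [h1, h2, sub_zero]
  -- dimension counting
  have hcardS : S.card = Module.finrank ℝ ({h // h ∈ S} → ℝ) := by
    rw [Module.finrank_pi, Fintype.card_coe]
  let A' : ({h // h ∈ S} → ℝ) →ₗ[ℝ] (LinearMap.ker L) :=
    LinearMap.codRestrict (LinearMap.ker L) A fun z => LinearMap.mem_ker.2 (hAL z)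
  have hA'inj : Function.Injective A' := by
    intro z₁ z₂ hz
    apply hAinj
    exact congrArg Subtype.val hz
  have hle : Module.finrank ℝ ({h // h ∈ S} → ℝ) ≤ Module.finrank ℝ (LinearMap.ker L) :=
    LinearMap.finrank_le_finrank_of_injective hA'inj
  have hrank : Module.finrank ℝ (LinearMap.range L) = n - 1 := by
    rw [LinearMap.range_eq_top.2 hLsurj, finrank_top, Module.finrank_pi,
      Fintype.card_subtype_compl, Fintype.card_subtype_eq, Fintype.card_fin]
  have hnull : Module.finrank ℝ (LinearMap.range L) + Module.finrank ℝ (LinearMap.ker L)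
      = ∑ i, (P i).card := by
    rw [LinearMap.finrank_range_add_finrank_ker, Module.finrank_pi, Fintype.card_sigma]
    exact Finset.sum_congr rfl fun i _ => Fintype.card_coe _
  have hsum_ge : n ≤ ∑ i, (P i).card := by
    calc n = ∑ _i : Fin n, 1 := by simp
    _ ≤ ∑ i, (P i).card := Finset.sum_le_sum fun i _ => Finset.Nonempty.card_pos (hPne i)
  rw [hrank] at hnull
  omega
end

section
/- Let n ≥ 2 measures P_1,...,P_n with at least one |P_i| ≥ 2 and weights λ_j > 0 summing to 1. Then there exist an index j (a weighted mean x_j ∈ S) and a pair (i,k) such that x_{ik} ∈ supp(P_i) does not appear in any representation x_j = Σ_l λ_l x_{lk'} with x_{lk'} ∈ supp(P_l) and the i-th chosen point equal to x_{ik}; i.e., (i,k) ∉ S_j for some j. -/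
open Finset
open scoped Classical

/-- For nontrivial input (`n ≥ 2` measures, at least one with two or more support
points), some weighted mean `s ∈ S` and some support point `x ∈ P i` exist such
that no combination of support points with `i`-th choice `x` has weighted mean `s`:
i.e. `(i,k) ∉ S_j` for some `j`, so the reduced LP drops at least one variable. -/
theorem exists_unused_pair (n d : ℕ) (hn : 2 ≤ n)
    (P : Fin n → Finset (EuclideanSpace ℝ (Fin d)))
    (hPne : ∀ i, (P i).Nonempty) (hbig : ∃ i, 2 ≤ (P i).card)
    (l : Fin n → ℝ) (hl : ∀ i, 0 < l i) (hsum : ∑ i, l i = 1) :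
    ∃ s ∈ (Fintype.piFinset P).image
        (fun f : Fin n → EuclideanSpace ℝ (Fin d) => ∑ i, l i • f i),
      ∃ i : Fin n, ∃ x ∈ P i,
        ¬ ∃ f ∈ Fintype.piFinset P, f i = x ∧ ∑ j, l j • f j = s := by
  obtain ⟨i, hi⟩ := hbig
  obtain ⟨a, ha, b, hb, hab⟩ := Finset.one_lt_card.mp hi
  -- pick a coordinate where a and b differ
  have hc : ∃ c : Fin d, a c ≠ b c := by
    by_contra h
    push_neg at h
    exact hab (PiLp.ext h)
  obtain ⟨c, hcne⟩ := hc
  set φ : EuclideanSpace ℝ (Fin d) → ℝ := fun v => v c with hφ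
  -- for each j, pick a maximizer of φ on P j
  have hmax : ∀ j : Fin n, ∃ m ∈ P j, ∀ y ∈ P j, φ y ≤ φ m :=
    fun j => (P j).exists_max_image φ (hPne j)
  choose m hmmem hmle using hmax
  -- x : the one of a,b with strictly smaller φ than the max
  have hx : ∃ x ∈ P i, φ x < φ (m i) := by
    rcases lt_or_ge (φ a) (φ (m i)) with h | h
    · exact ⟨a, ha, h⟩
    · refine ⟨b, hb, ?_⟩
      have hb' : φ b ≤ φ (m i) := hmle i b hb
      have ha' : φ a ≤ φ (m i) := hmle i a ha
      have haeq : φ a = φ (m i) := le_antisymm ha' h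
      rcases lt_or_eq_of_le hb' with h' | h'
      · exact h'
      · exact absurd (haeq.trans h'.symm) hcne
  obtain ⟨x, hxmem, hxlt⟩ := hx
  refine ⟨∑ j, l j • m j, Finset.mem_image.mpr ⟨m, ?_, rfl⟩, i, x, hxmem, ?_⟩
  · exact Fintype.mem_piFinset.mpr hmmem
  rintro ⟨f, hf, hfi, hfs⟩
  have hfmem : ∀ j, f j ∈ P j := Fintype.mem_piFinset.mp hf
  have happ : ∀ (g : Fin n → EuclideanSpace ℝ (Fin d)),
      (∑ j, l j • g j) c = ∑ j, l j * g j c := by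
    intro g
    rw [WithLp.ofLp_sum, Finset.sum_apply]
    rfl
  have h1 : (∑ j, l j • f j) c = (∑ j, l j • m j) c := by rw [hfs]
  rw [happ, happ] at h1
  have hlt : ∑ j, l j * f j c < ∑ j, l j * m j c := by
    refine Finset.sum_lt_sum (fun j _ => ?_) ⟨i, Finset.mem_univ i, ?_⟩
    · exact mul_le_mul_of_nonneg_left (hmle j (f j) (hfmem j)) (hl j).le
    · have : φ (f i) < φ (m i) := hfi ▸ hxlt
      exact mul_lt_mul_of_pos_left this (hl i)
  exact absurd h1 hlt.ne
end
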